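/- Let g(q₂,q₃,q₄) = cos(q₂) + cos(q₂+q₃) + cos(q₃+q₄) + cos(q₄) on 𝕋³. Then the critical point set of g consists exactly of: the two isolated points (0,0,0) and (π,0,π), and the three one-parameter families P₁(ϑ) = (ϑ, π, -ϑ), P₂(ϑ) = (ϑ, π, ϑ+π), P₃(ϑ) = (ϑ, -2ϑ, ϑ+π), ϑ ∈ 𝕋. -/

import Mathlib

open Real

/-- Equality of angles on the circle `ℝ/2πℤ`. -/
def AngleEq (x y : ℝ) : Prop := ∃ k : ℤ, x = y + 2 * π * k

private lemma key (x y : ℝ) :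
    Real.sin x + Real.sin y = 0 ↔
      (∃ k : ℤ, x + y = 2 * π * k) ∨ (∃ k : ℤ, x - y = π + 2 * π * k) := by
  have hs : Real.sin x + Real.sin y = 2 * (Real.sin ((x + y) / 2) * Real.cos ((x - y) / 2)) := by
    have h := Real.sin_sub_sin x (-y)
    rw [Real.sin_neg, sub_neg_eq_add] at h
    rw [h]; ring_nf
  rw [hs, mul_eq_zero, mul_eq_zero]
  constructor
  · rintro (h | h | h)
    · norm_num at h
    · rw [Real.sin_eq_zero_iff] at h
      obtain ⟨n, hn⟩ := h
      exact Or.inl ⟨n, by linarith⟩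
    · rw [Real.cos_eq_zero_iff] at h
      obtain ⟨n, hn⟩ := h
      refine Or.inr ⟨n, ?_⟩
      have : (x - y) / 2 = (2 * (n : ℝ) + 1) * π / 2 := by exact_mod_cast hn
      linarith
  · rintro (⟨k, hk⟩ | ⟨k, hk⟩)
    · refine Or.inr (Or.inl ?_)
      rw [Real.sin_eq_zero_iff]
      exact ⟨k, by linarith⟩
    · refine Or.inr (Or.inr ?_)
      rw [Real.cos_eq_zero_iff]
      exact ⟨k, by push_cast; linarith⟩

/-- The critical points of
`g(q₂,q₃,q₄) = cos q₂ + cos(q₂+q₃) + cos(q₃+q₄) + cos q₄` on `𝕋³` are exactly: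
the two isolated points `(0,0,0)` and `(π,0,π)`, and the three one-parameter
families `P₁(ϑ) = (ϑ, π, -ϑ)`, `P₂(ϑ) = (ϑ, π, ϑ+π)`, `P₃(ϑ) = (ϑ, -2ϑ, ϑ+π)`. -/
theorem stmt7 (g : ℝ → ℝ → ℝ → ℝ)
    (hg : ∀ q₂ q₃ q₄, g q₂ q₃ q₄ =
      Real.cos q₂ + Real.cos (q₂ + q₃) + Real.cos (q₃ + q₄) + Real.cos q₄)
    (q₂ q₃ q₄ : ℝ) :
    (deriv (fun x => g x q₃ q₄) q₂ = 0 ∧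
     deriv (fun y => g q₂ y q₄) q₃ = 0 ∧
     deriv (fun z => g q₂ q₃ z) q₄ = 0) ↔
    ((AngleEq q₂ 0 ∧ AngleEq q₃ 0 ∧ AngleEq q₄ 0) ∨
     (AngleEq q₂ π ∧ AngleEq q₃ 0 ∧ AngleEq q₄ π) ∨
     (AngleEq q₃ π ∧ AngleEq q₄ (-q₂)) ∨
     (AngleEq q₃ π ∧ AngleEq q₄ (q₂ + π)) ∨
     (AngleEq q₃ (-2 * q₂) ∧ AngleEq q₄ (q₂ + π))) := by
  -- compute the three partial derivatives
  have d2 : deriv (fun x => g x q₃ q₄) q₂ = -(Real.sin q₂ + Real.sin (q₂ + q₃)) := by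
    have hfun : (fun x => g x q₃ q₄)
        = fun x => Real.cos x + Real.cos (x + q₃) + Real.cos (q₃ + q₄) + Real.cos q₄ :=
      funext fun x => hg x q₃ q₄
    rw [hfun]
    have h1 : HasDerivAt (fun x : ℝ => Real.cos (x + q₃)) (-Real.sin (q₂ + q₃) * 1) q₂ :=
      by have := (Real.hasDerivAt_cos (q₂ + q₃)).comp q₂ ((hasDerivAt_id q₂).add_const q₃); exact this
    have h := (((Real.hasDerivAt_cos q₂).add h1).add_const (Real.cos (q₃ + q₄))).add_const
      (Real.cos q₄)
    exact h.deriv.trans (by ring)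
  have d3 : deriv (fun y => g q₂ y q₄) q₃ = -(Real.sin (q₂ + q₃) + Real.sin (q₃ + q₄)) := by
    have hfun : (fun y => g q₂ y q₄)
        = fun y => Real.cos q₂ + Real.cos (q₂ + y) + Real.cos (y + q₄) + Real.cos q₄ :=
      funext fun y => hg q₂ y q₄
    rw [hfun]
    have h1 : HasDerivAt (fun y : ℝ => Real.cos (q₂ + y)) (-Real.sin (q₂ + q₃) * 1) q₃ :=
      (Real.hasDerivAt_cos (q₂ + q₃)).comp q₃ ((hasDerivAt_id q₃).const_add q₂)
    have h2 : HasDerivAt (fun y : ℝ => Real.cos (y + q₄)) (-Real.sin (q₃ + q₄) * 1) q₃ :=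
      by have := (Real.hasDerivAt_cos (q₃ + q₄)).comp q₃ ((hasDerivAt_id q₃).add_const q₄); exact this
    have h := (((hasDerivAt_const q₃ (Real.cos q₂)).add h1).add h2).add_const (Real.cos q₄)
    exact h.deriv.trans (by ring)
  have d4 : deriv (fun z => g q₂ q₃ z) q₄ = -(Real.sin (q₃ + q₄) + Real.sin q₄) := by
    have hfun : (fun z => g q₂ q₃ z)
        = fun z => Real.cos q₂ + Real.cos (q₂ + q₃) + Real.cos (q₃ + z) + Real.cos z :=
      funext fun z => hg q₂ q₃ z
    rw [hfun]
    have h1 : HasDerivAt (fun z : ℝ => Real.cos (q₃ + z)) (-Real.sin (q₃ + q₄) * 1) q₄ :=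
      (Real.hasDerivAt_cos (q₃ + q₄)).comp q₄ ((hasDerivAt_id q₄).const_add q₃)
    have h := (((hasDerivAt_const q₄ (Real.cos q₂)).add_const (Real.cos (q₂ + q₃))).add h1).add
      (Real.hasDerivAt_cos q₄)
    exact h.deriv.trans (by ring)
  rw [d2, d3, d4, neg_eq_zero, neg_eq_zero, neg_eq_zero, key, key, key]
  constructor
  · rintro ⟨h1, h2, h3⟩
    -- first handle the cases where q₃ ≡ π
    have hpi : (∃ k : ℤ, q₃ = π + 2 * π * k) →
        ((AngleEq q₂ 0 ∧ AngleEq q₃ 0 ∧ AngleEq q₄ 0) ∨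
         (AngleEq q₂ π ∧ AngleEq q₃ 0 ∧ AngleEq q₄ π) ∨
         (AngleEq q₃ π ∧ AngleEq q₄ (-q₂)) ∨
         (AngleEq q₃ π ∧ AngleEq q₄ (q₂ + π)) ∨
         (AngleEq q₃ (-2 * q₂) ∧ AngleEq q₄ (q₂ + π))) := by
      rintro ⟨k, hk⟩
      rcases h2 with ⟨c, hc⟩ | ⟨c, hc⟩
      · exact Or.inr (Or.inr (Or.inl ⟨⟨k, hk⟩, ⟨c - 1 - 2 * k, by push_cast; linarith⟩⟩))
      · exact Or.inr (Or.inr (Or.inr (Or.inl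
          ⟨⟨k, hk⟩, ⟨-c - 1, by push_cast; linarith⟩⟩)))
    rcases h1 with ⟨a, ha⟩ | ⟨a, ha⟩
    · rcases h3 with ⟨b, hb⟩ | ⟨b, hb⟩
      · -- 2q₂+q₃ = 2πa, q₃+2q₄ = 2πb
        rcases h2 with ⟨c, hc⟩ | ⟨c, hc⟩
        · -- q₂+2q₃+q₄ = 2πc ⇒ q₃ = π(2c-a-b)
          rcases Int.even_or_odd (2 * c - a - b) with ⟨m, hm⟩ | ⟨m, hm⟩
          · -- q₃ = 2πm
            have hmr : 2 * (c : ℝ) - a - b = m + m := by exact_mod_cast hm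
            have hq3 : q₃ = 2 * π * m := by
              linear_combination hc - ha / 2 - hb / 2 + π * hmr
            have hq2 : q₂ = π * a - π * m := by linear_combination ha / 2 - hq3 / 2
            have hq4 : q₄ = π * b - π * m := by linear_combination hb / 2 - hq3 / 2
            rcases Int.even_or_odd (a - m) with ⟨u, hu⟩ | ⟨u, hu⟩
            · have hur : (a : ℝ) - m = u + u := by exact_mod_cast hu
              exact Or.inl ⟨⟨u, by push_cast; linear_combination hq2 + π * hur⟩,
                ⟨m, by push_cast; linear_combination hq3⟩,
                ⟨c - u - 2 * m, by
                  push_cast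
                  linear_combination hq4 - π * hmr - π * hur⟩⟩
            · have hur : (a : ℝ) - m = 2 * u + 1 := by exact_mod_cast hu
              exact Or.inr (Or.inl ⟨⟨u, by push_cast; linear_combination hq2 + π * hur⟩,
                ⟨m, by push_cast; linear_combination hq3⟩,
                ⟨c - u - 2 * m - 1, by
                  push_cast
                  linear_combination hq4 - π * hmr - π * hur⟩⟩)
          · -- q₃ = π(2m+1) ≡ π, and q₄ ≡ -q₂
            have hmr : 2 * (c : ℝ) - a - b = 2 * m + 1 := by exact_mod_cast hm
            have hq3 : q₃ = π + 2 * π * m := by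
              linear_combination hc - ha / 2 - hb / 2 + π * hmr
            exact Or.inr (Or.inr (Or.inl ⟨⟨m, hq3⟩,
              ⟨c - 2 * m - 1, by push_cast; linear_combination hc - 2 * hq3⟩⟩))
        · -- q₂ - q₄ = π + 2πc : family P₃
          exact Or.inr (Or.inr (Or.inr (Or.inr
            ⟨⟨a, by push_cast; linarith⟩, ⟨-c - 1, by push_cast; linarith⟩⟩)))
      · exact hpi ⟨b, by linarith⟩
    · exact hpi ⟨-a - 1, by push_cast; linarith⟩
  · rintro (⟨⟨a, ha⟩, ⟨b, hb⟩, ⟨c, hc⟩⟩ | ⟨⟨a, ha⟩, ⟨b, hb⟩, ⟨c, hc⟩⟩ |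
      ⟨⟨a, ha⟩, ⟨b, hb⟩⟩ | ⟨⟨a, ha⟩, ⟨b, hb⟩⟩ | ⟨⟨a, ha⟩, ⟨b, hb⟩⟩)
    · exact ⟨Or.inl ⟨a + a + b, by push_cast; linarith⟩,
        Or.inl ⟨a + 2 * b + c, by push_cast; linarith⟩,
        Or.inl ⟨b + c + c, by push_cast; linarith⟩⟩
    · exact ⟨Or.inl ⟨a + a + b + 1, by push_cast; linarith⟩,
        Or.inl ⟨a + 2 * b + c + 1, by push_cast; linarith⟩,
        Or.inl ⟨b + c + c + 1, by push_cast; linarith⟩⟩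
    · exact ⟨Or.inr ⟨-a - 1, by push_cast; linarith⟩,
        Or.inl ⟨2 * a + b + 1, by push_cast; linarith⟩,
        Or.inr ⟨a, by push_cast; linarith⟩⟩
    · exact ⟨Or.inr ⟨-a - 1, by push_cast; linarith⟩,
        Or.inr ⟨-b - 1, by push_cast; linarith⟩,
        Or.inr ⟨a, by push_cast; linarith⟩⟩
    · exact ⟨Or.inl ⟨a, by push_cast; linarith⟩,
        Or.inr ⟨-b - 1, by push_cast; linarith⟩,
        Or.inl ⟨a + 2 * b + 1, by push_cast; linarith⟩⟩
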